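/- Let (A,B) ∈ F^{n×n} × F^{n×m} and suppose (zI - A)^{-1} B = P(z) Q(z)^{-1} with P ∈ F[z]^{n×m}, Q ∈ F[z]^{m×m}, det(Q) ≢ 0. Then (A,B) is reachable (the Kalman matrix [B, AB, ..., A^{n-1}B] has rank n) if and only if the only row vector c ∈ F^{1×n} with c·P ≡ 0 is c = 0. In particular, reachability depends only on P. -/

import Mathlib

set_option synthInstance.maxHeartbeats 1000000
set_option maxHeartbeats 1000000
open Matrix Polynomial

section AuxFacts

variable {F : Type*} [Field F] {n m : ℕ}

lemma aux_vecMul_map {R S : Type*} [CommRing R] [CommRing S] (f : R →+* S)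
    {a b : Type*} [Fintype a] (v : a → R) (M : Matrix a b R) :
    (fun i => f (v i)) ᵥ* (M.map f) = fun j => f ((v ᵥ* M) j) := by
  funext j
  simp [Matrix.vecMul, dotProduct, Matrix.map_apply, map_sum, _root_.map_mul]


lemma aux_vecMul_smul {R : Type*} [CommRing R] {a b : Type*} [Fintype a]
    (v : a → R) (r : R) (M : Matrix a b R) :
    v ᵥ* (r • M) = r • (v ᵥ* M) := by
  funext j
  simp [Matrix.vecMul, dotProduct, Finset.mul_sum]
  exact Finset.sum_congr rfl fun i _ => by ring


lemma aux_vecMul_sum {R : Type*} [CommRing R] {a b : Type*} [Fintype a]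
    (v : a → R) {ι : Type*} (s : Finset ι) (M : ι → Matrix a b R) :
    v ᵥ* (∑ i ∈ s, M i) = ∑ i ∈ s, v ᵥ* M i := by
  funext j
  simp only [Matrix.vecMul, dotProduct, Finset.sum_apply, Matrix.sum_apply,
    Finset.mul_sum]
  rw [Finset.sum_comm]


lemma aux_fun_zero_iff {R S : Type*} [CommRing R] [CommRing S] (f : R →+* S)
    (hf : Function.Injective f) {ι : Type*} (v : ι → R) :
    (fun j => f (v j)) = 0 ↔ v = 0 := by
  constructor
  · intro h
    funext j
    apply hf
    have := congrFun h j
    simpa using this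
  · intro h
    funext j
    have := congrFun h j
    simp only [Pi.zero_apply] at this ⊢
    rw [this, map_zero]


lemma aux_rank {F : Type*} [Field F] {n : ℕ} {N : Type*} [Fintype N]
    (M : Matrix (Fin n) N F) :
    M.rank = n ↔ ∀ c : Fin n → F, c ᵥ* M = 0 → c = 0 := by
  classical
  rw [← Matrix.rank_transpose]
  have hker : (∀ c : Fin n → F, c ᵥ* M = 0 → c = 0) ↔
      LinearMap.ker (Mᵀ.mulVecLin) = ⊥ := by
    rw [LinearMap.ker_eq_bot']
    constructor
    · intro h c hc; exact h c (by rwa [Matrix.mulVecLin_apply, Matrix.mulVec_transpose] at hc)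
    · intro h c hc; exact h c (by rwa [Matrix.mulVecLin_apply, Matrix.mulVec_transpose])
  rw [hker]
  have h := LinearMap.finrank_range_add_finrank_ker (Mᵀ.mulVecLin)
  have hfr : Module.finrank F (Fin n → F) = n := by simp
  rw [hfr] at h
  unfold Matrix.rank
  constructor
  · intro hr
    have : Module.finrank F (LinearMap.ker Mᵀ.mulVecLin) = 0 := by omega
    exact Submodule.finrank_eq_zero.mp this
  · intro hk
    have : Module.finrank F (LinearMap.ker Mᵀ.mulVecLin) = 0 :=
      Submodule.finrank_eq_zero.mpr hk
    omega


noncomputable def auxv (A : Matrix (Fin n) (Fin n) F) (c : Fin n → F) : ℕ → (Fin n → F)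
  | 0 => 0
  | t + 1 => auxv A c t ᵥ* A + A.charpoly.coeff (n - t) • c


set_option maxRecDepth 10000 in
lemma auxv_closed (A : Matrix (Fin n) (Fin n) F) (c : Fin n → F) :
    ∀ t, t ≤ n → auxv A c t =
      c ᵥ* ∑ d ∈ Finset.range t, A.charpoly.coeff (n - t + 1 + d) • A ^ d := by
  intro t
  induction t with
  | zero => intro _; simp [auxv]
  | succ t ih =>
    intro ht
    have ht' : t ≤ n := le_of_lt (Nat.lt_of_lt_of_le (Nat.lt_succ_self t) ht)
    rw [auxv, ih ht']
    have hsum1 : (∑ d ∈ Finset.range t, A.charpoly.coeff (n - t + 1 + d) • A ^ d) * A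
        = ∑ d ∈ Finset.range t, A.charpoly.coeff (n - t + 1 + d) • A ^ (d + 1) := by
      rw [Finset.sum_mul]
      exact Finset.sum_congr rfl fun d _ => by rw [smul_mul_assoc, pow_succ]
    have h1 : (c ᵥ* ∑ d ∈ Finset.range t, A.charpoly.coeff (n - t + 1 + d) • A ^ d) ᵥ* A
        = c ᵥ* ∑ d ∈ Finset.range t, A.charpoly.coeff (n - t + 1 + d) • A ^ (d + 1) := by
      rw [Matrix.vecMul_vecMul, hsum1]
    rw [h1]
    have h2 : A.charpoly.coeff (n - t) • c
        = c ᵥ* (A.charpoly.coeff (n - t) • (1 : Matrix (Fin n) (Fin n) F)) := by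
      rw [aux_vecMul_smul, Matrix.vecMul_one]
    have hsum2 : (∑ d ∈ Finset.range (t + 1), A.charpoly.coeff (n - (t + 1) + 1 + d) • A ^ d)
        = (∑ d ∈ Finset.range t, A.charpoly.coeff (n - t + 1 + d) • A ^ (d + 1))
          + A.charpoly.coeff (n - t) • (1 : Matrix (Fin n) (Fin n) F) := by
      have e0 : (∑ d ∈ Finset.range (t + 1), A.charpoly.coeff (n - (t + 1) + 1 + d) • A ^ d)
          = ∑ d ∈ Finset.range (t + 1), A.charpoly.coeff (n - t + d) • A ^ d := by
        refine Finset.sum_congr rfl fun d _ => ?_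
        rw [show n - (t + 1) + 1 + d = n - t + d by omega]
      rw [e0, Finset.sum_range_succ']
      have e2 : (∑ d ∈ Finset.range t, A.charpoly.coeff (n - t + (d + 1)) • A ^ (d + 1))
          = ∑ d ∈ Finset.range t, A.charpoly.coeff (n - t + 1 + d) • A ^ (d + 1) := by
        refine Finset.sum_congr rfl fun d _ => ?_
        rw [show n - t + (d + 1) = n - t + 1 + d by omega]
      rw [e2, pow_zero]
      norm_num
    rw [hsum2, Matrix.vecMul_add, ← h2]


lemma auxw_zero (A : Matrix (Fin n) (Fin n) F) (c : Fin n → F) {k : ℕ} (hk : n ≤ k) :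
    auxv A c (n - k) = 0 := by
  have : n - k = 0 := by omega
  rw [this]; rfl


lemma auxw_rec (A : Matrix (Fin n) (Fin n) F) (c : Fin n → F) {k : ℕ} (hk : k < n) :
    auxv A c (n - k) = auxv A c (n - (k + 1)) ᵥ* A + A.charpoly.coeff (k + 1) • c := by
  have h1 : n - k = (n - (k + 1)) + 1 := by omega
  have h2 : n - (n - (k + 1)) = k + 1 := by omega
  rw [h1, auxv, h2]


lemma auxw_zero_vecMul (A : Matrix (Fin n) (Fin n) F) (c : Fin n → F) :
    auxv A c (n - 0) ᵥ* A = -(A.charpoly.coeff 0 • c) := by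
  have hdeg : A.charpoly.natDegree = n := by
    rw [Matrix.charpoly_natDegree_eq_dim, Fintype.card_fin]
  have hch : ∑ i ∈ Finset.range (n + 1), A.charpoly.coeff i • A ^ i = 0 := by
    have := A.aeval_self_charpoly
    rwa [Polynomial.aeval_eq_sum_range, hdeg] at this
  have hsplit : ∑ i ∈ Finset.range (n + 1), A.charpoly.coeff i • A ^ i
      = A.charpoly.coeff 0 • (1 : Matrix (Fin n) (Fin n) F)
        + ∑ d ∈ Finset.range n, A.charpoly.coeff (d + 1) • A ^ (d + 1) := by
    rw [Finset.sum_range_succ', pow_zero]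
    exact add_comm _ _
  have hkey : ∑ d ∈ Finset.range n, A.charpoly.coeff (d + 1) • A ^ (d + 1)
      = -(A.charpoly.coeff 0 • (1 : Matrix (Fin n) (Fin n) F)) := by
    rw [hsplit] at hch
    linear_combination (norm := abel) hch
  rw [Nat.sub_zero, auxv_closed A c n le_rfl, Matrix.vecMul_vecMul]
  have hsum : (∑ d ∈ Finset.range n, A.charpoly.coeff (n - n + 1 + d) • A ^ d) * A
      = ∑ d ∈ Finset.range n, A.charpoly.coeff (d + 1) • A ^ (d + 1) := by
    rw [Finset.sum_mul]
    exact Finset.sum_congr rfl fun d _ => by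
      rw [smul_mul_assoc, pow_succ]
      congr 2
      omega
  rw [hsum, hkey, ← neg_smul, aux_vecMul_smul, Matrix.vecMul_one, neg_smul]


noncomputable def auxW (A : Matrix (Fin n) (Fin n) F) (c : Fin n → F) : Fin n → Polynomial F :=
  fun j => ∑ k ∈ Finset.range n, C (auxv A c (n - k) j) * X ^ k


lemma auxW_coeff (A : Matrix (Fin n) (Fin n) F) (c : Fin n → F) (j : Fin n) (t : ℕ) :
    (auxW A c j).coeff t = auxv A c (n - t) j := by
  unfold auxW
  rw [Polynomial.finset_sum_coeff]
  simp only [Polynomial.coeff_C_mul, Polynomial.coeff_X_pow, mul_ite, mul_one, mul_zero]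
  rw [Finset.sum_ite_eq (Finset.range n) t (fun k => auxv A c (n - k) j)]
  split_ifs with h
  · rfl
  · rw [Finset.mem_range, not_lt] at h
    rw [auxw_zero A c h]
    rfl


lemma auxW_identity (A : Matrix (Fin n) (Fin n) F) (c : Fin n → F) :
    auxW A c ᵥ* charmatrix A = fun j => A.charpoly * C (c j) := by
  have hdeg : A.charpoly.natDegree = n := by
    rw [Matrix.charpoly_natDegree_eq_dim, Fintype.card_fin]
  funext j
  have expand : (auxW A c ᵥ* charmatrix A) j
      = auxW A c j * X - ∑ i, auxW A c i * C (A i j) := by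
    have e1 : (auxW A c ᵥ* (Matrix.scalar (Fin n) (X : F[X]))) j = auxW A c j * X := by
      rw [Matrix.scalar_apply, Matrix.vecMul_diagonal]
    have e2 : (auxW A c ᵥ* ((C : F →+* F[X]).mapMatrix A)) j
        = ∑ i, auxW A c i * C (A i j) := by
      simp [Matrix.vecMul, dotProduct, RingHom.mapMatrix_apply, Matrix.map_apply]
    rw [charmatrix, Matrix.vecMul_sub, Pi.sub_apply, e1, e2]
  rw [expand]
  ext t
  rw [Polynomial.coeff_sub, Polynomial.finset_sum_coeff]
  simp only [Polynomial.coeff_mul_C, auxW_coeff, Polynomial.coeff_mul_C]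
  have hsum : ∀ s : ℕ, (∑ i, auxv A c (n - s) i * A i j) = (auxv A c (n - s) ᵥ* A) j := by
    intro s; rfl
  rcases t with _ | s
  · rw [Polynomial.mul_coeff_zero, Polynomial.coeff_X_zero, mul_zero, hsum 0, auxw_zero_vecMul]
    simp
  · rw [Polynomial.coeff_mul_X, auxW_coeff, hsum (s + 1)]
    by_cases hs : s < n
    · have := congrFun (auxw_rec A c hs) j
      simp only [Pi.add_apply, Pi.smul_apply, smul_eq_mul] at this
      rw [this]; ring
    · push_neg at hs
      rw [auxw_zero A c hs, auxw_zero A c (by omega : n ≤ s + 1)]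
      have : A.charpoly.coeff (s + 1) = 0 :=
        Polynomial.coeff_eq_zero_of_natDegree_lt (by omega)
      simp [this, Matrix.zero_vecMul]


lemma aux_iff6 (A : Matrix (Fin n) (Fin n) F) (B : Matrix (Fin n) (Fin m) F) (c : Fin n → F) :
    (∀ t, auxv A c (n - t) ᵥ* B = 0) ↔ ∀ d, d < n → c ᵥ* (A ^ d * B) = 0 := by
  have hdeg : A.charpoly.natDegree = n := by
    rw [Matrix.charpoly_natDegree_eq_dim, Fintype.card_fin]
  have hmon : A.charpoly.coeff n = 1 := by
    have := (Matrix.charpoly_monic A).coeff_natDegree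
    rwa [hdeg] at this
  have push : ∀ (s : ℕ) (a : ℕ → F), (c ᵥ* ∑ e ∈ Finset.range s, a e • A ^ e) ᵥ* B
      = ∑ e ∈ Finset.range s, a e • (c ᵥ* (A ^ e * B)) := by
    intro s a
    have e1 : (∑ e ∈ Finset.range s, a e • A ^ e) * B
        = ∑ e ∈ Finset.range s, a e • (A ^ e * B) := by
      rw [Matrix.sum_mul]
      exact Finset.sum_congr rfl fun e _ => Matrix.smul_mul (a e) (A ^ e) B
    rw [Matrix.vecMul_vecMul, e1, aux_vecMul_sum]
    exact Finset.sum_congr rfl fun e _ => aux_vecMul_smul c (a e) (A ^ e * B)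
  constructor
  · intro h d
    induction d using Nat.strong_induction_on with
    | _ d ih =>
      intro hd
      have ht := h (n - 1 - d)
      rw [show n - (n - 1 - d) = d + 1 by omega, auxv_closed A c (d + 1) (by omega),
        push] at ht
      rw [Finset.sum_range_succ, show n - (d + 1) + 1 + d = n by omega, hmon, one_smul] at ht
      have hz : (∑ e ∈ Finset.range d,
          A.charpoly.coeff (n - (d + 1) + 1 + e) • (c ᵥ* (A ^ e * B))) = 0 := by
        refine Finset.sum_eq_zero fun e he => ?_
        rw [ih e (Finset.mem_range.mp he)
          (by have := Finset.mem_range.mp he; omega), smul_zero]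
      rw [hz, zero_add] at ht
      exact ht
  · intro h t
    rw [auxv_closed A c (n - t) (Nat.sub_le n t), push]
    refine Finset.sum_eq_zero fun e he => ?_
    rw [h e (by have := Finset.mem_range.mp he; omega), smul_zero]


lemma aux_key (A : Matrix (Fin n) (Fin n) F) (B : Matrix (Fin n) (Fin m) F)
    (P : Matrix (Fin n) (Fin m) (Polynomial F))
    (Q : Matrix (Fin m) (Fin m) (Polynomial F)) (hQ : Q.det ≠ 0)
    (hfac :
      ((RatFunc.X : RatFunc F) • (1 : Matrix (Fin n) (Fin n) (RatFunc F)) -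
          A.map (algebraMap F (RatFunc F)))⁻¹ *
        B.map (algebraMap F (RatFunc F)) =
      P.map (algebraMap (Polynomial F) (RatFunc F)) *
        (Q.map (algebraMap (Polynomial F) (RatFunc F)))⁻¹) (c : Fin n → F) :
    ((fun i => Polynomial.C (c i)) ᵥ* P = 0) ↔ ∀ d, d < n → c ᵥ* (A ^ d * B) = 0 := by
  classical
  set φ := algebraMap (Polynomial F) (RatFunc F) with hφ
  have hφinj : Function.Injective φ := RatFunc.algebraMap_injective F
  have hψ : ∀ x : F, algebraMap F (RatFunc F) x = φ (Polynomial.C x) := by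
    intro x
    rw [hφ, ← Polynomial.algebraMap_eq, ← IsScalarTower.algebraMap_apply]
  -- the charmatrix identification
  have hMeq : ((RatFunc.X : RatFunc F) • (1 : Matrix (Fin n) (Fin n) (RatFunc F)) -
      A.map (algebraMap F (RatFunc F))) = (charmatrix A).map φ := by
    ext i j
    by_cases h : i = j
    · subst h
      simp [charmatrix_apply_eq, Matrix.map_apply, hψ, hφ, RatFunc.algebraMap_X,
        RatFunc.algebraMap_C, RatFunc.algebraMap_eq_C, Matrix.one_apply]
    · simp [charmatrix_apply_ne _ _ _ h, Matrix.map_apply, hψ, hφ, RatFunc.algebraMap_C,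
        RatFunc.algebraMap_eq_C, Matrix.one_apply_ne h]
  set Mc := (charmatrix A).map φ with hMc
  set Pm := P.map φ
  set Qm := Q.map φ
  set Bm := B.map (algebraMap F (RatFunc F)) with hBm
  have hpne : (A.charpoly : Polynomial F) ≠ 0 := (Matrix.charpoly_monic A).ne_zero
  have hMdet : IsUnit Mc.det := by
    have hd : Mc.det = φ A.charpoly := by
      rw [hMc, ← RingHom.mapMatrix_apply, ← RingHom.map_det]
      rfl
    rw [hd]
    exact isUnit_iff_ne_zero.mpr (fun h => hpne (hφinj (by rwa [map_zero])))
  have hQdet : IsUnit Qm.det := by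
    have hd : Qm.det = φ Q.det := by
      rw [show Qm = Q.map φ from rfl, ← RingHom.mapMatrix_apply, ← RingHom.map_det]
    rw [hd]
    exact isUnit_iff_ne_zero.mpr (fun h => hQ (hφinj (by rwa [map_zero])))
  rw [hMeq] at hfac
  set c' : Fin n → RatFunc F := fun i => φ (Polynomial.C (c i)) with hc'
  -- iff1
  have iff1 : ((fun i => Polynomial.C (c i)) ᵥ* P = 0) ↔ c' ᵥ* Pm = 0 := by
    rw [hc', aux_vecMul_map φ (fun i => Polynomial.C (c i)) P,
      aux_fun_zero_iff φ hφinj]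
  -- iff2
  have iff2 : c' ᵥ* Pm = 0 ↔ c' ᵥ* (Mc⁻¹ * Bm) = 0 := by
    rw [hfac]
    constructor
    · intro h
      rw [← Matrix.vecMul_vecMul, h, Matrix.zero_vecMul]
    · intro h
      have := congrArg (fun v => v ᵥ* Qm) h
      simp only [Matrix.zero_vecMul] at this
      rwa [Matrix.vecMul_vecMul, Matrix.mul_assoc, Matrix.nonsing_inv_mul Qm hQdet,
        Matrix.mul_one] at this
  -- the resolvent row
  set W' : Fin n → RatFunc F := fun i => φ (auxW A c i) with hW'
  have hWM : W' ᵥ* Mc = fun j => φ A.charpoly * c' j := by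
    rw [hW', hMc, aux_vecMul_map φ (auxW A c) (charmatrix A), auxW_identity]
    funext j
    show φ (A.charpoly * Polynomial.C (c j)) = φ A.charpoly * c' j
    rw [_root_.map_mul]
  have hWsmul : W' = φ A.charpoly • (c' ᵥ* Mc⁻¹) := by
    have h1 : W' ᵥ* (Mc * Mc⁻¹) = W' := by
      rw [Matrix.mul_nonsing_inv Mc hMdet, Matrix.vecMul_one]
    rw [← h1, ← Matrix.vecMul_vecMul, hWM]
    have : (fun j => φ A.charpoly * c' j) = φ A.charpoly • c' := rfl
    rw [this, Matrix.smul_vecMul]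
  have iff3 : c' ᵥ* (Mc⁻¹ * Bm) = 0 ↔ W' ᵥ* Bm = 0 := by
    rw [← Matrix.vecMul_vecMul, hWsmul, Matrix.smul_vecMul]
    rw [smul_eq_zero]
    have : φ A.charpoly ≠ 0 := fun h => hpne (hφinj (by rwa [map_zero]))
    tauto
  -- iff4 : down to polynomials
  have hBmap : Bm = (B.map Polynomial.C).map φ := by
    rw [hBm]
    ext i j
    simp only [Matrix.map_apply]
    rw [hψ]
  have iff4 : W' ᵥ* Bm = 0 ↔ auxW A c ᵥ* (B.map Polynomial.C) = 0 := by
    rw [hBmap, hW', aux_vecMul_map φ (auxW A c) (B.map Polynomial.C),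
      aux_fun_zero_iff φ hφinj]
  -- iff5 : coefficients
  have iff5 : auxW A c ᵥ* (B.map Polynomial.C) = 0 ↔
      ∀ t, auxv A c (n - t) ᵥ* B = 0 := by
    constructor
    · intro h t
      funext j
      have hj := congrFun h j
      have : ((auxW A c ᵥ* B.map Polynomial.C) j).coeff t = 0 := by rw [hj]; rfl
      rw [show (auxW A c ᵥ* B.map Polynomial.C) j
          = ∑ i, auxW A c i * Polynomial.C (B i j) from rfl] at this
      rw [Polynomial.finset_sum_coeff] at this
      simp only [Polynomial.coeff_mul_C, auxW_coeff] at this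
      exact this
    · intro h
      funext j
      ext t
      rw [show (auxW A c ᵥ* B.map Polynomial.C) j
          = ∑ i, auxW A c i * Polynomial.C (B i j) from rfl]
      rw [Polynomial.finset_sum_coeff]
      simp only [Polynomial.coeff_mul_C, auxW_coeff]
      have := congrFun (h t) j
      simpa [Matrix.vecMul, dotProduct] using this
  rw [iff1, iff2, iff3, iff4, iff5, aux_iff6]

end AuxFacts

/-- Let `(A, B)` be a linear system over a field `F` and suppose
`(zI - A)⁻¹ B = P(z) Q(z)⁻¹` (over the field of rational functions) with `P, Q`
polynomial matrices and `det Q ≢ 0`. Then `(A, B)` is reachable (the Kalman matrix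
`[B, AB, …, A^{n-1}B]` has rank `n`) if and only if the only row vector `c` with
`c ⬝ P ≡ 0` is `c = 0`. In particular, reachability depends only on `P`. -/
theorem stmt18 (F : Type*) [Field F] (n m : ℕ)
    (A : Matrix (Fin n) (Fin n) F) (B : Matrix (Fin n) (Fin m) F)
    (P : Matrix (Fin n) (Fin m) (Polynomial F))
    (Q : Matrix (Fin m) (Fin m) (Polynomial F)) (hQ : Q.det ≠ 0)
    (hfac :
      ((RatFunc.X : RatFunc F) • (1 : Matrix (Fin n) (Fin n) (RatFunc F)) -
          A.map (algebraMap F (RatFunc F)))⁻¹ *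
        B.map (algebraMap F (RatFunc F)) =
      P.map (algebraMap (Polynomial F) (RatFunc F)) *
        (Q.map (algebraMap (Polynomial F) (RatFunc F)))⁻¹) :
    (Matrix.of fun (r : Fin n) (c : Fin n × Fin m) =>
        (A ^ (c.1 : ℕ) * B) r c.2).rank = n ↔
      ∀ c : Fin n → F, (fun i => Polynomial.C (c i)) ᵥ* P = 0 → c = 0 := by
  rw [aux_rank]
  apply forall_congr'
  intro c
  have h1 := aux_key A B P Q hQ hfac c
  have h2 : (c ᵥ* (Matrix.of fun (r : Fin n) (c : Fin n × Fin m) =>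
      (A ^ (c.1 : ℕ) * B) r c.2) = 0) ↔ ∀ d, d < n → c ᵥ* (A ^ d * B) = 0 := by
    constructor
    · intro h d hd
      funext j
      have := congrFun h (⟨d, hd⟩, j)
      simpa [Matrix.vecMul, dotProduct, Matrix.of_apply] using this
    · intro h
      funext x
      obtain ⟨i, j⟩ := x
      have := congrFun (h i i.isLt) j
      simpa [Matrix.vecMul, dotProduct, Matrix.of_apply] using this
  rw [h2, h1]
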